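/- Let 1 < c ∈ ℕ and V ⊆ {0,…,c-1}² with (0,0) ∈ V and |V| ≥ 1, and let X = ⋃_i X_i be the generated discrete self-similar fractal. Then the zeta-dimension of X equals log|V| / log c. -/

import Mathlib

def fractalStage (c : ℕ) (V : Set (ℕ × ℕ)) : ℕ → Set (ℕ × ℕ)
  | 0 => {(0, 0)}
  | i + 1 => fractalStage c V i ∪
      ⋃ v ∈ V, (fun x => x + c ^ i • v) '' fractalStage c V i

section Comb

variable {c : ℕ} {V : Set (ℕ × ℕ)}

lemma stage_box (hc : 1 < c) (hV : V ⊆ Set.Iio c ×ˢ Set.Iio c) :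
    ∀ i, fractalStage c V i ⊆ Set.Iio (c ^ i) ×ˢ Set.Iio (c ^ i) := by
  intro i
  induction i with
  | zero =>
    rintro p hp
    simp only [fractalStage] at hp
    subst hp
    constructor <;> simp [Nat.lt_of_lt_of_le Nat.zero_lt_one (le_refl 1)]
  | succ i ih =>
    rintro p (hp | hp)
    · have := ih hp
      have h1 : c ^ i ≤ c ^ (i+1) := Nat.pow_le_pow_right (by omega) (by omega)
      exact ⟨lt_of_lt_of_le this.1 h1, lt_of_lt_of_le this.2 h1⟩
    · simp only [Set.mem_iUnion, Set.mem_image] at hp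
      obtain ⟨v, hv, x, hx, rfl⟩ := hp
      have hxb := ih hx
      have hvb := hV hv
      have hcpos : 0 < c ^ i := Nat.pow_pos (by omega)
      have hle : c ^ i ≤ c ^ i * c := Nat.le_mul_of_pos_right _ (by omega)
      have he : c ^ i * (c - 1) = c ^ i * c - c ^ i := by
        rw [Nat.mul_sub, Nat.mul_one]
      have hps : c ^ (i+1) = c ^ i * c := pow_succ c i
      constructor
      · show x.1 + c ^ i * v.1 < c ^ (i+1)
        have hv1 : v.1 < c := by simpa using hvb.1
        have hx1 : x.1 < c ^ i := by simpa using hxb.1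
        have hm : c ^ i * v.1 ≤ c ^ i * (c - 1) := Nat.mul_le_mul_left _ (by omega)
        omega
      · show x.2 + c ^ i * v.2 < c ^ (i+1)
        have hv2 : v.2 < c := by simpa using hvb.2
        have hx2 : x.2 < c ^ i := by simpa using hxb.2
        have hm : c ^ i * v.2 ≤ c ^ i * (c - 1) := Nat.mul_le_mul_left _ (by omega)
        omega

lemma stage_eq_image (h0 : (0, 0) ∈ V) (i : ℕ) :
    fractalStage c V (i+1) = (fun p : (ℕ×ℕ) × (ℕ×ℕ) => p.2 + c ^ i • p.1) ''
      (V ×ˢ fractalStage c V i) := by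
  apply Set.Subset.antisymm
  · rintro p (hp | hp)
    · exact ⟨((0,0), p), ⟨h0, hp⟩, by simp⟩
    · simp only [Set.mem_iUnion, Set.mem_image] at hp
      obtain ⟨v, hv, x, hx, rfl⟩ := hp
      exact ⟨(v, x), ⟨hv, hx⟩, rfl⟩
  · rintro _ ⟨⟨v, x⟩, ⟨hv, hx⟩, rfl⟩
    right
    simp only [Set.mem_iUnion, Set.mem_image]
    exact ⟨v, hv, x, hx, rfl⟩

lemma stage_finite (h0 : (0, 0) ∈ V) (hVf : V.Finite) : ∀ i, (fractalStage c V i).Finite := by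
  intro i
  induction i with
  | zero => simpa [fractalStage] using Set.finite_singleton _
  | succ i ih =>
    rw [stage_eq_image h0]
    exact ((hVf.prod ih)).image _

lemma add_pow_inj {q a b u w : ℕ} (ha : a < q) (hb : b < q) (h : a + q * u = b + q * w) :
    a = b ∧ u = w := by
  have h1 : (a + q * u) % q = a := by
    rw [Nat.add_mul_mod_self_left, Nat.mod_eq_of_lt ha]
  have h2 : (b + q * w) % q = b := by
    rw [Nat.add_mul_mod_self_left, Nat.mod_eq_of_lt hb]
  have hab : a = b := by rw [← h1, ← h2, h]
  constructor
  · exact hab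
  · have : q * u = q * w := by omega
    exact Nat.eq_of_mul_eq_mul_left (by omega) this

lemma stage_card (hc : 1 < c) (hV : V ⊆ Set.Iio c ×ˢ Set.Iio c) (h0 : (0, 0) ∈ V) :
    ∀ i, (fractalStage c V i).ncard = V.ncard ^ i := by
  intro i
  induction i with
  | zero => simp [fractalStage]
  | succ i ih =>
    rw [stage_eq_image h0]
    have hinj : Set.InjOn (fun p : (ℕ×ℕ) × (ℕ×ℕ) => p.2 + c ^ i • p.1)
        (V ×ˢ fractalStage c V i) := by
      rintro ⟨v, x⟩ ⟨hv, hx⟩ ⟨w, y⟩ ⟨hw, hy⟩ h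
      have hxb := stage_box hc hV i hx
      have hyb := stage_box hc hV i hy
      simp only [Prod.ext_iff] at h ⊢
      have h1 : x.1 + c ^ i * v.1 = y.1 + c ^ i * w.1 := h.1
      have h2 : x.2 + c ^ i * v.2 = y.2 + c ^ i * w.2 := h.2
      have e1 := add_pow_inj hxb.1 hyb.1 h1
      have e2 := add_pow_inj hxb.2 hyb.2 h2
      exact ⟨⟨e1.2, e2.2⟩, ⟨e1.1, e2.1⟩⟩
    rw [Set.ncard_image_of_injOn hinj, ← Nat.card_coe_set_eq,
      Nat.card_congr (Equiv.Set.prod _ _), Nat.card_prod,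
      Nat.card_coe_set_eq, Nat.card_coe_set_eq, ih, pow_succ]
    ring

lemma stage_mono : ∀ {i j}, i ≤ j → fractalStage c V i ⊆ fractalStage c V j := by
  intro i j hij
  induction j with
  | zero => simp [Nat.le_zero.mp hij]
  | succ j ih =>
    rcases Nat.lt_or_ge i (j+1) with h | h
    · exact (ih (by omega)).trans (Set.subset_union_left)
    · have : i = j + 1 := by omega
      subst this; rfl

lemma stage_trunc (hc : 1 < c) :
    ∀ {i j}, i ≤ j → ∀ p ∈ fractalStage c V j,
    p.1 < c ^ i → p.2 < c ^ i → p ∈ fractalStage c V i := by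
  intro i j hij
  induction j with
  | zero => intro p hp _ _; have hi0 : i = 0 := Nat.le_zero.mp hij; subst hi0; exact hp
  | succ j ih =>
    intro p hp h1 h2
    rcases Nat.lt_or_ge j i with h | h
    · have : i = j + 1 := by omega
      subst this; exact hp
    · rcases hp with hp | hp
      · exact ih h p hp h1 h2
      · simp only [Set.mem_iUnion, Set.mem_image] at hp
        obtain ⟨v, hv, x, hx, rfl⟩ := hp
        simp only [Prod.fst_add, Prod.snd_add, Prod.smul_fst, Prod.smul_snd,
          smul_eq_mul] at h1 h2
        have hci : c ^ i ≤ c ^ j := Nat.pow_le_pow_right (by omega) h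
        have hv1 : v.1 = 0 := by
          by_contra hne
          have : c ^ j ≤ x.1 + c ^ j * v.1 := by
            have : 1 ≤ v.1 := by omega
            calc c ^ j ≤ c ^ j * v.1 := Nat.le_mul_of_pos_right _ (by omega)
              _ ≤ x.1 + c ^ j * v.1 := by omega
          omega
        have hv2 : v.2 = 0 := by
          by_contra hne
          have : c ^ j ≤ x.2 + c ^ j * v.2 := by
            calc c ^ j ≤ c ^ j * v.2 := Nat.le_mul_of_pos_right _ (by omega)
              _ ≤ x.2 + c ^ j * v.2 := by omega
          omega
        have : x + c ^ j • v = x := by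
          have : v = (0, 0) := Prod.ext hv1 hv2
          subst this; simp
        rw [this]
        rw [hv1, Nat.mul_zero, Nat.add_zero] at h1
        rw [hv2, Nat.mul_zero, Nat.add_zero] at h2
        exact ih h x hx h1 h2

end Comb

open Filter Real

lemma tendsto_log_nat : Tendsto (fun n : ℕ => Real.log n) atTop atTop :=
  Real.tendsto_log_atTop.comp tendsto_natCast_atTop_atTop

lemma tendsto_one_div_log : Tendsto (fun n : ℕ => 1 / Real.log n) atTop (nhds 0) := by
  simpa [one_div, Pi.inv_def] using tendsto_log_nat.inv_tendsto_atTop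

lemma tendsto_natlog_div_log {c : ℕ} (hc : 1 < c) :
    Tendsto (fun n : ℕ => (Nat.log c n : ℝ) / Real.log n) atTop
      (nhds (1 / Real.log c)) := by
  have hL : (0:ℝ) < Real.log c := Real.log_pos (by exact_mod_cast hc)
  apply tendsto_of_tendsto_of_tendsto_of_le_of_le'
    (g := fun n : ℕ => 1 / Real.log c - 1 / Real.log n)
    (h := fun _ : ℕ => 1 / Real.log c)
  · simpa using (tendsto_const_nhds (x := 1 / Real.log c)).sub tendsto_one_div_log
  · exact tendsto_const_nhds
  · filter_upwards [eventually_ge_atTop 2] with n hn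
    have hN : (0:ℝ) < Real.log n := Real.log_pos (by exact_mod_cast hn)
    have hup : (n:ℝ) < (c:ℝ) ^ (Nat.log c n + 1) := by
      exact_mod_cast Nat.lt_pow_succ_log_self hc n
    have hlog : Real.log n ≤ ((Nat.log c n : ℝ) + 1) * Real.log c := by
      calc Real.log n ≤ Real.log ((c:ℝ) ^ (Nat.log c n + 1)) := by
            apply (Real.log_le_log_iff (by positivity) (by positivity)).2 hup.le
        _ = ((Nat.log c n : ℝ) + 1) * Real.log c := by
            rw [Real.log_pow]; push_cast; ring
    have hsum : (Nat.log c n : ℝ)/Real.log n + 1/Real.log n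
        = ((Nat.log c n : ℝ) + 1)/Real.log n := by ring
    rw [sub_le_iff_le_add, hsum, div_le_div_iff₀ hL hN]
    linarith
  · filter_upwards [eventually_ge_atTop 2] with n hn
    have hN : (0:ℝ) < Real.log n := Real.log_pos (by exact_mod_cast hn)
    have hlow : (Nat.log c n : ℝ) * Real.log c ≤ Real.log n := by
      have h1 : (c:ℝ) ^ Nat.log c n ≤ (n:ℝ) := by
        exact_mod_cast Nat.pow_log_le_self c (by omega)
      calc (Nat.log c n : ℝ) * Real.log c = Real.log ((c:ℝ) ^ Nat.log c n) := by
            rw [Real.log_pow]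
        _ ≤ Real.log n := (Real.log_le_log_iff (by positivity) (by positivity)).2 h1
    rw [div_le_div_iff₀ hN (Real.log_pos (by exact_mod_cast hc))]
    linarith

noncomputable def zetaDimN (A : Set (ℕ × ℕ)) : EReal :=
  Filter.atTop.limsup (fun n : ℕ =>
    ((Real.log (max 1 ({p ∈ A | p.1 + p.2 ≤ n}.ncard : ℝ)) /
      Real.log (max 1 (n : ℝ)) : ℝ) : EReal))

section Main

variable {c : ℕ} {V : Set (ℕ × ℕ)}

lemma S_finite (hc : 1 < c) (n : ℕ) :
    {p ∈ ⋃ i, fractalStage c V i | p.1 + p.2 ≤ n}.Finite := by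
  apply Set.Finite.subset ((Set.finite_Iic n).prod (Set.finite_Iic n))
  rintro p ⟨_, hp⟩
  exact ⟨by simp; omega, by simp; omega⟩

lemma S_upper (hc : 1 < c) (hV : V ⊆ Set.Iio c ×ˢ Set.Iio c) (h0 : (0, 0) ∈ V)
    {n : ℕ} (hn : 1 ≤ n) :
    {p ∈ ⋃ i, fractalStage c V i | p.1 + p.2 ≤ n}.ncard ≤
      V.ncard ^ (Nat.log c n + 1) := by
  set k := Nat.log c n with hk
  have hVf : V.Finite :=
    (((Set.finite_Iio c).prod (Set.finite_Iio c)).subset hV)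
  have hsub : {p ∈ ⋃ i, fractalStage c V i | p.1 + p.2 ≤ n} ⊆
      fractalStage c V (k + 1) := by
    rintro p ⟨hp, hpn⟩
    obtain ⟨j, hj⟩ : ∃ j, p ∈ fractalStage c V j := by
      simpa using hp
    have hb : n < c ^ (k + 1) := Nat.lt_pow_succ_log_self hc n
    have h1 : p.1 < c ^ (k + 1) := by omega
    have h2 : p.2 < c ^ (k + 1) := by omega
    rcases Nat.le_total j (k + 1) with h | h
    · exact stage_mono h hj
    · exact stage_trunc hc h p hj h1 h2
  calc {p ∈ ⋃ i, fractalStage c V i | p.1 + p.2 ≤ n}.ncard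
      ≤ (fractalStage c V (k + 1)).ncard :=
        Set.ncard_le_ncard hsub (stage_finite h0 hVf (k + 1))
    _ = V.ncard ^ (k + 1) := stage_card hc hV h0 (k + 1)

lemma S_lower (hc : 1 < c) (hV : V ⊆ Set.Iio c ×ˢ Set.Iio c) (h0 : (0, 0) ∈ V)
    (hm : 1 ≤ V.ncard) {n : ℕ} (hn : c ≤ n) :
    V.ncard ^ (Nat.log c n - 1) ≤
      {p ∈ ⋃ i, fractalStage c V i | p.1 + p.2 ≤ n}.ncard := by
  set j := Nat.log c (n / 2 + 1) with hjdef
  have hjk : Nat.log c n - 1 ≤ j := by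
    have h1 : n / c ≤ n / 2 := Nat.div_le_div_left (by omega) (by omega)
    calc Nat.log c n - 1 = Nat.log c (n / c) := (Nat.log_div_base c n).symm
      _ ≤ Nat.log c (n / 2 + 1) := Nat.log_mono_right (by omega)
  have hsub : fractalStage c V j ⊆
      {p ∈ ⋃ i, fractalStage c V i | p.1 + p.2 ≤ n} := by
    intro p hp
    refine ⟨Set.mem_iUnion.2 ⟨j, hp⟩, ?_⟩
    have hb := stage_box hc hV j hp
    have h1 : p.1 < c ^ j := hb.1
    have h2 : p.2 < c ^ j := hb.2
    have hcj : c ^ j ≤ n / 2 + 1 := Nat.pow_log_le_self c (by omega)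
    omega
  calc V.ncard ^ (Nat.log c n - 1) ≤ V.ncard ^ j := Nat.pow_le_pow_right hm hjk
    _ = (fractalStage c V j).ncard := (stage_card hc hV h0 j).symm
    _ ≤ _ := Set.ncard_le_ncard hsub (S_finite hc n)

end Main

theorem zetaDim_fractal (c : ℕ) (hc : 1 < c) (V : Set (ℕ × ℕ))
    (hV : V ⊆ Set.Iio c ×ˢ Set.Iio c) (h0 : (0, 0) ∈ V) (hcard : 1 ≤ V.ncard) :
    zetaDimN (⋃ i, fractalStage c V i) =
      ((Real.log V.ncard / Real.log c : ℝ) : EReal) := by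
  set m := V.ncard with hm
  set M := Real.log m with hM
  have hM0 : 0 ≤ M := Real.log_natCast_nonneg m
  have hL : (0:ℝ) < Real.log c := Real.log_pos (by exact_mod_cast hc)
  set f : ℕ → ℝ := fun n =>
    Real.log (max 1 ({p ∈ ⋃ i, fractalStage c V i | p.1 + p.2 ≤ n}.ncard : ℝ)) /
      Real.log (max 1 (n : ℝ)) with hf
  have hT : Filter.Tendsto f Filter.atTop (nhds (M / Real.log c)) := by
    apply tendsto_of_tendsto_of_tendsto_of_le_of_le'
      (g := fun n : ℕ => M * ((Nat.log c n : ℝ) / Real.log n) - M * (1 / Real.log n))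
      (h := fun n : ℕ => M * ((Nat.log c n : ℝ) / Real.log n) + M * (1 / Real.log n))
    · have := ((tendsto_natlog_div_log hc).const_mul M).sub
        (tendsto_one_div_log.const_mul M)
      simpa [mul_one_div, mul_zero, div_eq_mul_inv] using this
    · have := ((tendsto_natlog_div_log hc).const_mul M).add
        (tendsto_one_div_log.const_mul M)
      simpa [mul_one_div, mul_zero, div_eq_mul_inv] using this
    · -- lower bound, eventually
      filter_upwards [Filter.eventually_ge_atTop (max c 2)] with n hn
      have hn2 : 2 ≤ n := le_trans (le_max_right c 2) hn
      have hnc : c ≤ n := le_trans (le_max_left c 2) hn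
      set k := Nat.log c n with hk
      have hk1 : 1 ≤ k := Nat.log_pos hc hnc
      set card := {p ∈ ⋃ i, fractalStage c V i | p.1 + p.2 ≤ n}.ncard with hcarddef
      have hlow : m ^ (k - 1) ≤ card := S_lower hc hV h0 hcard hnc
      have hcard1 : 1 ≤ card := le_trans (Nat.one_le_pow _ _ (by omega)) hlow
      have hN : (0:ℝ) < Real.log n := Real.log_pos (by exact_mod_cast hn2)
      have hfn : f n = Real.log card / Real.log n := by
        have h1 : max 1 ((card:ℝ)) = card := max_eq_right (by exact_mod_cast hcard1)
        have h2 : max 1 ((n:ℝ)) = n := max_eq_right (by exact_mod_cast (by omega : 1 ≤ n))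
        simp only [hf, ← hcarddef, h1, h2]
      have hlogcard : ((k:ℝ) - 1) * M ≤ Real.log card := by
        have h1 : ((m:ℝ)) ^ (k-1) ≤ (card:ℝ) := by exact_mod_cast hlow
        have h2 : Real.log ((m:ℝ) ^ (k-1)) ≤ Real.log card :=
          (Real.log_le_log_iff (by positivity) (by positivity)).2 h1
        rw [Real.log_pow] at h2
        have h3 : ((k - 1 : ℕ) : ℝ) = (k:ℝ) - 1 := by
          push_cast [Nat.cast_sub hk1]; ring
        rw [h3] at h2
        linarith [h2]
      have : M * ((k:ℝ) / Real.log n) - M * (1 / Real.log n)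
          = ((k:ℝ) - 1) * M / Real.log n := by ring
      rw [this, hfn]
      gcongr
    · -- upper bound, eventually
      filter_upwards [Filter.eventually_ge_atTop (max c 2)] with n hn
      have hn2 : 2 ≤ n := le_trans (le_max_right c 2) hn
      have hnc : c ≤ n := le_trans (le_max_left c 2) hn
      set k := Nat.log c n with hk
      set card := {p ∈ ⋃ i, fractalStage c V i | p.1 + p.2 ≤ n}.ncard with hcarddef
      have hup : card ≤ m ^ (k + 1) := S_upper hc hV h0 (by omega)
      have hlow : m ^ (k - 1) ≤ card := S_lower hc hV h0 hcard hnc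
      have hcard1 : 1 ≤ card := le_trans (Nat.one_le_pow _ _ (by omega)) hlow
      have hN : (0:ℝ) < Real.log n := Real.log_pos (by exact_mod_cast hn2)
      have hfn : f n = Real.log card / Real.log n := by
        have h1 : max 1 ((card:ℝ)) = card := max_eq_right (by exact_mod_cast hcard1)
        have h2 : max 1 ((n:ℝ)) = n := max_eq_right (by exact_mod_cast (by omega : 1 ≤ n))
        simp only [hf, ← hcarddef, h1, h2]
      have hlogcard : Real.log card ≤ ((k:ℝ) + 1) * M := by
        have h1 : (card:ℝ) ≤ ((m:ℝ)) ^ (k+1) := by exact_mod_cast hup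
        have h2 : Real.log card ≤ Real.log ((m:ℝ) ^ (k+1)) :=
          (Real.log_le_log_iff (by positivity) (by positivity)).2 h1
        rw [Real.log_pow] at h2
        push_cast at h2
        linarith [h2]
      have : M * ((k:ℝ) / Real.log n) + M * (1 / Real.log n)
          = ((k:ℝ) + 1) * M / Real.log n := by ring
      rw [this, hfn]
      gcongr
  have hTE : Filter.Tendsto (fun n : ℕ => ((f n : ℝ) : EReal)) Filter.atTop
      (nhds ((M / Real.log c : ℝ) : EReal)) := EReal.tendsto_coe.2 hT
  exact hTE.limsup_eq
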